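/- For every μ > 0, the vector field F(x,y,z) = (μ(y²+z²), μxy + xz, −xy + μxz) on ℝ³ is incomplete: the function e(x,y,z) = −x² + y² + z² is a first integral, the cone {e = 0} is invariant, and on it the x-coordinate satisfies x' = μx², so every solution starting at a point of the cone with x₀ > 0 blows up in finite time. -/

import Mathlib

/-- The geodesic field of `q = diag(−1,1,1)` on `e(μ)`:
`(μ(y²+z²), μxy + xz, −xy + μxz)`. -/
def Fe (μ : ℝ) (v : Fin 3 → ℝ) : Fin 3 → ℝ :=
  ![μ * ((v 1) ^ 2 + (v 2) ^ 2), μ * v 0 * v 1 + v 0 * v 2, -(v 0 * v 1) + μ * v 0 * v 2]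

lemma Fe0 (μ : ℝ) (v : Fin 3 → ℝ) : Fe μ v 0 = μ * ((v 1) ^ 2 + (v 2) ^ 2) := rfl
lemma Fe1 (μ : ℝ) (v : Fin 3 → ℝ) : Fe μ v 1 = μ * v 0 * v 1 + v 0 * v 2 := rfl
lemma Fe2 (μ : ℝ) (v : Fin 3 → ℝ) : Fe μ v 2 = -(v 0 * v 1) + μ * v 0 * v 2 := rfl

lemma firstIntegral (μ : ℝ) (γ : ℝ → Fin 3 → ℝ) (t : ℝ) (h : HasDerivAt γ (Fe μ (γ t)) t) :
    HasDerivAt (fun u => -(γ u 0) ^ 2 + (γ u 1) ^ 2 + (γ u 2) ^ 2) 0 t := by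
  have h0 := (hasDerivAt_pi.mp h) 0
  have h1 := (hasDerivAt_pi.mp h) 1
  have h2 := (hasDerivAt_pi.mp h) 2
  have := (((h0.pow 2).neg.add (h1.pow 2)).add (h2.pow 2))
  rw [Fe0, Fe1, Fe2] at this
  refine HasDerivAt.congr_deriv this ?_
  ring

/-- For `μ > 0`, `e = −x² + y² + z²` is a first integral of the geodesic
field on `e(μ)`, and along any solution starting on the cone `{e = 0}` with `x 0 > 0`
one has `x' = μx²`, so no such solution can be globally defined: the field is
incomplete. -/
theorem stmt_19 (μ : ℝ) (hμ : 0 < μ) :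
    (∀ (γ : ℝ → Fin 3 → ℝ) (t : ℝ), HasDerivAt γ (Fe μ (γ t)) t →
        HasDerivAt (fun u => -(γ u 0) ^ 2 + (γ u 1) ^ 2 + (γ u 2) ^ 2) 0 t) ∧
    (∀ γ : ℝ → Fin 3 → ℝ, (∀ t, HasDerivAt γ (Fe μ (γ t)) t) →
        -(γ 0 0) ^ 2 + (γ 0 1) ^ 2 + (γ 0 2) ^ 2 = 0 → 0 < γ 0 0 →
        (∀ t, HasDerivAt (fun u => γ u 0) (μ * (γ t 0) ^ 2) t) ∧ False) := by
  refine ⟨firstIntegral μ, ?_⟩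
  intro γ hγ hcone hx0
  set x : ℝ → ℝ := fun u => γ u 0 with hxdef
  -- the first integral is constant
  have hE : ∀ t : ℝ, -(γ t 0) ^ 2 + (γ t 1) ^ 2 + (γ t 2) ^ 2 = 0 := by
    intro t
    have hconst : ∀ s : ℝ, (fun u => -(γ u 0) ^ 2 + (γ u 1) ^ 2 + (γ u 2) ^ 2) s =
        (fun u => -(γ u 0) ^ 2 + (γ u 1) ^ 2 + (γ u 2) ^ 2) 0 := by
      intro s
      exact is_const_of_deriv_eq_zero
        (fun u => (firstIntegral μ γ u (hγ u)).differentiableAt)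
        (fun u => (firstIntegral μ γ u (hγ u)).deriv) s 0
    simpa [hcone] using hconst t
  have hsq : ∀ t : ℝ, (γ t 1) ^ 2 + (γ t 2) ^ 2 = (x t) ^ 2 := by
    intro t; have := hE t; simp only [hxdef]; linarith
  have hx' : ∀ t, HasDerivAt x (μ * (x t) ^ 2) t := by
    intro t
    have h0 := (hasDerivAt_pi.mp (hγ t)) 0
    rw [Fe0, hsq t] at h0
    exact h0
  refine ⟨hx', ?_⟩
  -- x is monotone
  have hmono : Monotone x := by
    apply monotone_of_deriv_nonneg (fun u => (hx' u).differentiableAt)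
    intro u
    rw [(hx' u).deriv]
    positivity
  have hpos : ∀ t, 0 ≤ t → 0 < x t := fun t ht => lt_of_lt_of_le hx0 (hmono ht)
  set T : ℝ := 2 / (μ * x 0) with hT
  have hT0 : 0 < T := by positivity
  -- h := 1/x + μ t is constant on [0, T]
  set h : ℝ → ℝ := fun u => (x u)⁻¹ + μ * u with hhdef
  have hh' : ∀ u ∈ Set.Ico (0:ℝ) T, HasDerivWithinAt h 0 (Set.Ici u) u := by
    intro u hu
    have hxne : x u ≠ 0 := ne_of_gt (hpos u hu.1)
    have hlin : HasDerivAt (fun v : ℝ => μ * v) μ u := by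
      simpa using (hasDerivAt_id u).const_mul μ
    have : HasDerivAt h (-(μ * (x u) ^ 2) / (x u) ^ 2 + μ) u :=
      ((hx' u).inv hxne).add hlin
    have heq : -(μ * (x u) ^ 2) / (x u) ^ 2 + μ = 0 := by
      field_simp; ring
    rw [heq] at this
    exact this.hasDerivWithinAt
  have hcont : ContinuousOn h (Set.Icc 0 T) := by
    intro u hu
    have hxne : x u ≠ 0 := ne_of_gt (hpos u hu.1)
    exact (((hx' u).inv hxne).continuousAt.add (by fun_prop)).continuousWithinAt
  have hconst := constant_of_has_deriv_right_zero hcont hh' T (Set.right_mem_Icc.mpr hT0.le)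
  -- hconst : h T = h 0
  have hxT : 0 < x T := hpos T hT0.le
  have hμx0 : μ * x 0 ≠ 0 := by positivity
  have : (x T)⁻¹ + μ * T = (x 0)⁻¹ := by simpa [hhdef] using hconst
  have hμT : μ * T = 2 / x 0 := by
    rw [hT]; field_simp
  rw [hμT] at this
  have hxTinv : 0 < (x T)⁻¹ := inv_pos.mpr hxT
  have hx0inv : 0 < (x 0)⁻¹ := inv_pos.mpr hx0
  have h2 : 2 / x 0 = 2 * (x 0)⁻¹ := by ring
  nlinarith [hxTinv, hx0inv, this, h2]
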